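/- If G is a finite group with ψ(G)/|G|² > 13/36, then G is nilpotent. -/

import Mathlib

open Subgroup Finset

private lemma aux_arith (A B m q r ψ n : ℕ) (h1 : ψ ≤ A * r + B * m + m * (2 * r))
    (h2 : A + B = m) (h3 : r ≤ A) (h4 : m = q * r) (h5 : 3 ≤ q) (h6 : 1 ≤ r)
    (h7 : n = 2 * m) (h8 : 13 * n ^ 2 < 36 * ψ) : False := by
  have hrm : r ≤ m := by nlinarith
  zify at *
  nlinarith [mul_nonneg (sub_nonneg.mpr h3) (sub_nonneg.mpr hrm),
    mul_nonneg (mul_nonneg (sub_nonneg.mpr h5) (by positivity : (0:ℤ) ≤ 16 * (q:ℤ) + 12))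
      (by positivity : (0:ℤ) ≤ ((r:ℤ)) ^ 2)]

private lemma aux_normal_of_index_two {G : Type*} [Group G] (H : Subgroup G) (h : H.index = 2) :
    H.Normal := by
  constructor
  intro a ha g
  rw [Subgroup.mul_mem_iff_of_index_two h, Subgroup.mul_mem_iff_of_index_two h, inv_mem_iff]
  simp [ha]

theorem nilpotent_of_psi'' (G : Type*) [Group G] [Fintype G]
    (h : ((∑ x : G, orderOf x : ℕ) : ℚ) / (Fintype.card G : ℚ) ^ 2 > 13 / 36) :
    Group.IsNilpotent G := by
  classical
  set n := Fintype.card G with hn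
  have hn0 : 0 < n := Fintype.card_pos
  set ψ := ∑ x : G, orderOf x with hψ
  have hmain : 13 * n ^ 2 < 36 * ψ := by
    rw [gt_iff_lt, div_lt_div_iff₀ (by norm_num) (by positivity)] at h
    have : (13 * n ^ 2 : ℚ) < 36 * ψ := by push_cast at h ⊢; linarith
    exact_mod_cast this
  obtain ⟨x₀, -, hx₀⟩ := Finset.exists_max_image (univ : Finset G) orderOf ⟨1, mem_univ 1⟩
  set m := orderOf x₀ with hm
  have hm0 : 0 < m := orderOf_pos x₀
  have hψnm : ψ ≤ n * m := by
    calc ψ ≤ univ.card • m := Finset.sum_le_card_nsmul _ _ _ (fun g _ => hx₀ g (mem_univ g))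
    _ = n * m := by rw [smul_eq_mul, Finset.card_univ]
  have h13 : 13 * n < 36 * m := by nlinarith
  obtain ⟨d, hd⟩ : m ∣ n := orderOf_dvd_card
  have hd2 : d = 1 ∨ d = 2 := by
    rcases Nat.lt_or_ge d 3 with h3 | h3
    · interval_cases d
      · omega
      · left; rfl
      · right; rfl
    · exfalso; nlinarith
  rcases hd2 with hd1 | hd1
  · -- cyclic case
    have hnm : orderOf x₀ = Nat.card G := by
      rw [Nat.card_eq_fintype_card, ← hn, hd, hd1, mul_one]
    have : IsCyclic G := isCyclic_of_orderOf_eq_card x₀ hnm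
    letI : CommGroup G := IsCyclic.commGroup
    exact CommGroup.isNilpotent
  · -- index 2 case
    subst hd1
    have hn2m : n = 2 * m := by omega
    set C := Subgroup.zpowers x₀ with hC
    have hcardC : Nat.card C = m := Nat.card_zpowers x₀
    have hidx : C.index = 2 := by
      have h1 : Nat.card C * C.index = Nat.card G := Subgroup.card_mul_index C
      rw [hcardC, Nat.card_eq_fintype_card, ← hn] at h1
      have h1' : m * C.index = m * 2 := by omega
      exact Nat.eq_of_mul_eq_mul_left hm0 h1'
    haveI hCnorm : C.Normal := aux_normal_of_index_two C hidx
    -- pick y outside C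
    obtain ⟨y, hy⟩ : ∃ y : G, y ∉ C := by
      by_contra hall
      push_neg at hall
      have : C = ⊤ := (Subgroup.eq_top_iff' C).mpr hall
      rw [this, Subgroup.index_top] at hidx
      omega
    obtain ⟨t, ht⟩ : ∃ t : ℤ, x₀ ^ t = y * x₀ * y⁻¹ :=
      Subgroup.mem_zpowers_iff.mp (hCnorm.conj_mem x₀ (Subgroup.mem_zpowers x₀) y)
    -- conjugation by any outside element acts as t
    have hconj : ∀ g : G, g ∉ C → g * x₀ * g⁻¹ = x₀ ^ t := by
      intro g hg
      have hyg : y⁻¹ * g ∈ C := by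
        rw [Subgroup.mul_mem_iff_of_index_two hidx, inv_mem_iff]
        simp [hy, hg]
      obtain ⟨k, hk⟩ := Subgroup.mem_zpowers_iff.mp hyg
      have hg' : g = y * x₀ ^ k := by rw [hk]; group
      rw [ht, hg']
      group
    -- m divides t^2 - 1
    have hy2 : y ^ 2 ∈ C := Subgroup.sq_mem_of_index_two hidx y
    obtain ⟨e, he⟩ := Subgroup.mem_zpowers_iff.mp hy2
    have hkey : x₀ ^ (t * t) = x₀ := by
      have h1 : y * (y * x₀ * y⁻¹) * y⁻¹ = x₀ ^ (t * t) := by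
        rw [← ht, zpow_mul, ← conj_zpow, ht]
      have h2 : y * (y * x₀ * y⁻¹) * y⁻¹ = y ^ 2 * x₀ * (y ^ 2)⁻¹ := by
        rw [pow_two]; group
      rw [h2, ← he] at h1
      rw [← h1]
      group
    have hdvd_tt : (m : ℤ) ∣ t * t - 1 := by
      rw [orderOf_dvd_iff_zpow_eq_one, zpow_sub, zpow_one, hkey, mul_inv_cancel]
    set a := m.factorization 2 with ha
    set w := (t - 1).natAbs with hwdef
    by_cases hc : ∀ p : ℕ, p.Prime → p ≠ 2 → p ^ m.factorization p ∣ w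
    · -- nilpotent branch: the odd part of C is central
      have hdvd : m ∣ 2 ^ a * w := by
        rcases Nat.eq_zero_or_pos w with hw0 | hw0
        · simp [hw0]
        · have h2a : (2 : ℕ) ^ a ≠ 0 := by positivity
          rw [← Nat.factorization_le_iff_dvd hm0.ne' (Nat.mul_ne_zero h2a hw0.ne'),
            Finsupp.le_def]
          intro p
          by_cases pp : p.Prime
          · rw [Nat.factorization_mul h2a hw0.ne']
            simp only [Finsupp.coe_add, Pi.add_apply, Nat.Prime.factorization_pow Nat.prime_two,
              Finsupp.single_apply]
            by_cases hp2 : p = 2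
            · subst hp2; simp [← ha]
            · have hle : m.factorization p ≤ w.factorization p :=
                (Nat.Prime.pow_dvd_iff_le_factorization pp hw0.ne').mp (hc p pp hp2)
              simp [Ne.symm hp2]
              omega
          · simp [Nat.factorization_eq_zero_of_not_prime _ pp]
      have hzt : x₀ ^ ((2 ^ a : ℤ) * (t - 1)) = 1 := by
        rw [← orderOf_dvd_iff_zpow_eq_one, ← hm, Int.natCast_dvd]
        simpa [Int.natAbs_mul, Int.natAbs_pow, ← hwdef] using hdvd
      set z := x₀ ^ (2 ^ a) with hz
      have hzz : (x₀ : G) ^ (((2 : ℕ) ^ a : ℕ) : ℤ) = z := by rw [zpow_natCast]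
      have hxt2a : x₀ ^ ((((2 : ℕ) ^ a : ℕ) : ℤ) * t) = z := by
        have hexp : (((2 : ℕ) ^ a : ℕ) : ℤ) * t = (2 ^ a : ℤ) * (t - 1) + ((2 : ℕ) ^ a : ℕ) := by
          push_cast; ring
        rw [hexp, zpow_add, hzt, one_mul, zpow_natCast]
      have hzc : z ∈ Subgroup.center G := by
        rw [Subgroup.mem_center_iff]
        intro g
        by_cases hg : g ∈ C
        · obtain ⟨k, hk⟩ := Subgroup.mem_zpowers_iff.mp hg
          rw [← hk, ← hzz, ← zpow_add, ← zpow_add, add_comm]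
        · have h1 : g * z * g⁻¹ = z := by
            rw [← hzz, ← conj_zpow, hconj g hg, ← zpow_mul, mul_comm, hxt2a, ← hzz]
          conv_rhs => rw [← h1]
          simp [mul_assoc]
      set u := m / 2 ^ a with hu
      have h2am : 2 ^ a ∣ m := Nat.ordProj_dvd m 2
      have hmu : m = 2 ^ a * u := (Nat.mul_div_cancel' h2am).symm
      have hu0 : 0 < u := by
        rcases Nat.eq_zero_or_pos u with h0 | h0
        · rw [h0, mul_zero] at hmu; omega
        · exact h0
      have hordz : orderOf z = u := by
        rw [hz, orderOf_pow, ← hm, Nat.gcd_eq_right h2am]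
      set Z := Subgroup.zpowers z with hZ
      have hZle : Z ≤ Subgroup.center G := Subgroup.zpowers_le.mpr hzc
      haveI hZn : Z.Normal := by
        constructor
        intro b hb g
        have hbc : ∀ h : G, h * b = b * h := Subgroup.mem_center_iff.mp (hZle hb)
        have : g * b * g⁻¹ = b := by rw [hbc g]; simp [mul_assoc]
        rwa [this]
      have hcardZ : Nat.card Z = u := by rw [hZ, Nat.card_zpowers, hordz]
      have hidxZ : Z.index = 2 ^ (a + 1) := by
        have h1 : Nat.card Z * Z.index = Nat.card G := Subgroup.card_mul_index Z
        rw [hcardZ, Nat.card_eq_fintype_card, ← hn] at h1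
        have h2 : u * Z.index = u * 2 ^ (a + 1) := by
          rw [h1, hn2m, hmu]; ring
        exact Nat.eq_of_mul_eq_mul_left hu0 h2
      haveI : Fact (Nat.Prime 2) := ⟨Nat.prime_two⟩
      have hpg : IsPGroup 2 (G ⧸ Z) :=
        IsPGroup.of_card (by rw [← Subgroup.index_eq_card, hidxZ])
      haveI hnil : Group.IsNilpotent (G ⧸ Z) := hpg.isNilpotent
      exact _root_.isNilpotent_of_ker_le_center (QuotientGroup.mk' Z)
        (by rw [QuotientGroup.ker_mk']; exact hZle)
    · -- counting branch: contradiction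
      exfalso
      push_neg at hc
      obtain ⟨p, pp, hp2, hqw⟩ := hc
      set k := m.factorization p with hk
      set q := p ^ k with hq
      have hqm : q ∣ m := Nat.ordProj_dvd m p
      have hk1 : 1 ≤ k := by
        by_contra hk0
        push_neg at hk0
        have : k = 0 := by omega
        exact hqw (by simp [hq, this])
      have hp3 : 3 ≤ p := by
        have := pp.two_le
        omega
      have hq3 : 3 ≤ q := by
        calc 3 ≤ p := hp3
        _ = p ^ 1 := (pow_one p).symm
        _ ≤ p ^ k := Nat.pow_le_pow_right (by omega) hk1
      have hv : (m : ℤ) ∣ (t - 1) * (t + 1) := by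
        have h' : (t - 1) * (t + 1) = t * t - 1 := by ring
        rw [h']; exact hdvd_tt
      have hmw : m ∣ w * (t + 1).natAbs := by
        have h' := Int.natCast_dvd.mp hv
        rwa [Int.natAbs_mul] at h'
      have hpw : ¬ p ∣ w := by
        intro hpdvd
        have hpt1 : ¬ p ∣ (t + 1).natAbs := by
          intro hpd2
          have h1 : (p : ℤ) ∣ t - 1 := Int.natCast_dvd.mpr hpdvd
          have h2 : (p : ℤ) ∣ t + 1 := Int.natCast_dvd.mpr hpd2
          have h3 : (p : ℤ) ∣ 2 := by
            have h4 := dvd_sub h2 h1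
            have h5 : t + 1 - (t - 1) = 2 := by ring
            rwa [h5] at h4
          have h6 : p ∣ 2 := by exact_mod_cast h3
          have := Nat.le_of_dvd (by norm_num) h6
          omega
        have hcop : Nat.Coprime q (t + 1).natAbs :=
          Nat.Coprime.pow_left k ((Nat.Prime.coprime_iff_not_dvd pp).mpr hpt1)
        exact hqw (hcop.dvd_of_dvd_mul_right (dvd_trans hqm hmw))
      have hqcop : Nat.Coprime q w :=
        Nat.Coprime.pow_left k ((Nat.Prime.coprime_iff_not_dvd pp).mpr hpw)
      set r := m / q with hr
      have hmqr : m = q * r := (Nat.mul_div_cancel' hqm).symm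
      have hr1 : 1 ≤ r := by
        rcases Nat.eq_zero_or_pos r with h0 | h0
        · rw [h0, mul_zero] at hmqr; omega
        · exact h0
      have hordxq : orderOf (x₀ ^ q) = r := by
        rw [orderOf_pow, ← hm, Nat.gcd_eq_right hqm]
      have houts : ∀ g : G, g ∉ C → orderOf g ∣ 2 * r := by
        intro g hg
        obtain ⟨s, hs⟩ := Subgroup.mem_zpowers_iff.mp (Subgroup.sq_mem_of_index_two hidx g)
        have h1 : x₀ ^ (t * s) = x₀ ^ s := by
          have e1 : g * x₀ ^ s * g⁻¹ = x₀ ^ (t * s) := by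
            rw [← conj_zpow, hconj g hg, ← zpow_mul]
          have e2 : g * x₀ ^ s * g⁻¹ = x₀ ^ s := by
            rw [hs]; group
          rw [← e1, e2]
        have h2 : (m : ℤ) ∣ s * (t - 1) := by
          rw [hm, orderOf_dvd_iff_zpow_eq_one]
          have h' : s * (t - 1) = t * s - s := by ring
          rw [h', zpow_sub, h1, mul_inv_cancel]
        have h3 : q ∣ s.natAbs := by
          have h' : m ∣ (s * (t - 1)).natAbs := Int.natCast_dvd.mp h2
          rw [Int.natAbs_mul] at h'
          exact hqcop.dvd_of_dvd_mul_right (dvd_trans hqm h')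
        obtain ⟨s₂, hs₂⟩ : (q : ℤ) ∣ s := Int.natCast_dvd.mpr h3
        have hg2mem : g ^ 2 ∈ Subgroup.zpowers (x₀ ^ q) := by
          refine ⟨s₂, ?_⟩
          show (x₀ ^ q : G) ^ s₂ = g ^ 2
          have hstep : (x₀ ^ q : G) ^ s₂ = x₀ ^ ((q : ℤ) * s₂) := by
            rw [← zpow_natCast x₀ q, ← zpow_mul]
          rw [hstep, ← hs₂, hs]
        have h4 : orderOf (g ^ 2) ∣ r :=
          hordxq ▸ orderOf_dvd_of_mem_zpowers hg2mem
        have h5 : orderOf g ∣ 2 * orderOf (g ^ 2) := by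
          apply orderOf_dvd_of_pow_eq_one
          rw [pow_mul]
          exact pow_orderOf_eq_one (g ^ 2)
        exact h5.trans (mul_dvd_mul_left 2 h4)
      -- counting
      have hfiltC : (univ.filter (fun g : G => g ∈ C)).card = m := by
        rw [← Fintype.card_subtype, ← Nat.card_eq_fintype_card]
        exact hcardC
      have hfiltQ : (univ.filter (fun g : G => g ∈ Subgroup.zpowers (x₀ ^ q))).card = r := by
        rw [← Fintype.card_subtype, ← Nat.card_eq_fintype_card, Nat.card_zpowers, hordxq]
      set S1 := univ.filter (fun g : G => g ∈ C ∧ orderOf g ∣ r) with hS1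
      set S2 := univ.filter (fun g : G => g ∈ C ∧ ¬orderOf g ∣ r) with hS2
      set S3 := univ.filter (fun g : G => ¬g ∈ C) with hS3
      set SC := univ.filter (fun g : G => g ∈ C) with hSC
      have hd12 : Disjoint S1 S2 := by
        rw [Finset.disjoint_left]
        intro g hg1 hg2
        rw [hS1, mem_filter] at hg1
        rw [hS2, mem_filter] at hg2
        exact hg2.2.2 hg1.2.2
      have hdC3 : Disjoint SC S3 := by
        rw [Finset.disjoint_left]
        intro g hg1 hg2
        rw [hSC, mem_filter] at hg1
        rw [hS3, mem_filter] at hg2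
        exact hg2.2 hg1.2
      have hu12 : S1 ∪ S2 = SC := by
        ext g
        simp only [hS1, hS2, hSC, Finset.mem_union, mem_filter, mem_univ, true_and]
        tauto
      have huC3 : SC ∪ S3 = univ := by
        ext g
        simp only [hSC, hS3, Finset.mem_union, mem_filter, mem_univ, true_and]
        tauto
      have hSCcard : SC.card = m := by
        rw [hSC, ← Fintype.card_subtype, ← Nat.card_eq_fintype_card]
        exact hcardC
      have hAB : S1.card + S2.card = m := by
        rw [← hSCcard, ← hu12, Finset.card_union_of_disjoint hd12]
      have hS3card : S3.card = m := by
        have h' : SC.card + S3.card = n := by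
          rw [← Finset.card_union_of_disjoint hdC3, huC3, Finset.card_univ]
        omega
      have hsub : univ.filter (fun g : G => g ∈ Subgroup.zpowers (x₀ ^ q)) ⊆ S1 := by
        intro g hg
        rw [mem_filter] at hg
        rw [hS1, mem_filter]
        refine ⟨mem_univ g, ?_, ?_⟩
        · exact Subgroup.zpowers_le.mpr (Subgroup.pow_mem C (Subgroup.mem_zpowers x₀) q) hg.2
        · exact hordxq ▸ orderOf_dvd_of_mem_zpowers hg.2
      have hfiltQ : (univ.filter (fun g : G => g ∈ Subgroup.zpowers (x₀ ^ q))).card = r := by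
        rw [← Fintype.card_subtype, ← Nat.card_eq_fintype_card, Nat.card_zpowers, hordxq]
      have hA : r ≤ S1.card := hfiltQ ▸ Finset.card_le_card hsub
      have hsplit : ψ = ∑ g ∈ S1, orderOf g + ∑ g ∈ S2, orderOf g + ∑ g ∈ S3, orderOf g := by
        rw [hψ, ← huC3, Finset.sum_union hdC3, ← hu12, Finset.sum_union hd12]
      have hb1 : ∑ g ∈ S1, orderOf g ≤ S1.card * r := by
        have h' := Finset.sum_le_card_nsmul S1 orderOf r ?_
        · simpa using h'
        · intro g hg
          rw [hS1, mem_filter] at hg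
          exact Nat.le_of_dvd (by omega) hg.2.2
      have hb2 : ∑ g ∈ S2, orderOf g ≤ S2.card * m := by
        have h' := Finset.sum_le_card_nsmul S2 orderOf m ?_
        · simpa using h'
        · intro g hg
          rw [hS2, mem_filter] at hg
          exact Nat.le_of_dvd hm0 (orderOf_dvd_of_mem_zpowers hg.2.1)
      have hb3 : ∑ g ∈ S3, orderOf g ≤ m * (2 * r) := by
        have h' := Finset.sum_le_card_nsmul S3 orderOf (2 * r) ?_
        · rw [hS3card] at h'
          simpa using h'
        · intro g hg
          rw [hS3, mem_filter] at hg
          exact Nat.le_of_dvd (by omega) (houts g hg.2)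
      have hψb : ψ ≤ S1.card * r + S2.card * m + m * (2 * r) := by
        rw [hsplit]
        omega
      exact aux_arith S1.card S2.card m q r ψ n hψb hAB hA hmqr hq3 hr1 hn2m hmain
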